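/- Let n ≥ 5 and let G_n = K(n,2) be the Kneser graph on 2-subsets of {1,...,n}. If S ⊆ V(G_n) is such that the induced subgraph on V(G_n) \ S has at least 4 connected components, then every such component is a single isolated vertex. -/
import Mathlib

theorem stmt11 (n : ℕ) (hn : 5 ≤ n)
    (G : SimpleGraph {x : Finset (Fin n) // x.card = 2})
    (hG : ∀ u v, G.Adj u v ↔ Disjoint u.1 v.1)
    (S : Set {x : Finset (Fin n) // x.card = 2})
    (hcomp : 4 ≤ Nat.card (G.induce Sᶜ).ConnectedComponent) :
    ∀ u v : ↥Sᶜ, ¬ (G.induce Sᶜ).Adj u v := by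
  classical
  intro u v huv
  set H := G.induce Sᶜ with hH
  have hadj : G.Adj u.1 v.1 := huv
  have hdis : Disjoint u.1.1 v.1.1 := (hG u.1 v.1).mp hadj
  obtain ⟨a1, a2, ha, hu⟩ := Finset.card_eq_two.mp u.1.2
  obtain ⟨b1, b2, hb, hv⟩ := Finset.card_eq_two.mp v.1.2
  have hab : ∀ a ∈ u.1.1, ∀ b ∈ v.1.1, a ≠ b := by
    intro a ha' b hb' h
    exact Finset.disjoint_left.mp hdis ha' (h ▸ hb')
  have h11 : a1 ≠ b1 := hab a1 (by simp [hu]) b1 (by simp [hv])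
  have h12 : a1 ≠ b2 := hab a1 (by simp [hu]) b2 (by simp [hv])
  have h21 : a2 ≠ b1 := hab a2 (by simp [hu]) b1 (by simp [hv])
  have h22 : a2 ≠ b2 := hab a2 (by simp [hu]) b2 (by simp [hv])
  have hstruct : ∀ X : ↥Sᶜ, ¬ H.Reachable X u →
      X.1.1 = {a1,b1} ∨ X.1.1 = {a1,b2} ∨ X.1.1 = {a2,b1} ∨ X.1.1 = {a2,b2} := by
    intro X hX
    have hXu : ¬ Disjoint X.1.1 u.1.1 := by
      intro hd
      exact hX (SimpleGraph.Adj.reachable ((hG X.1 u.1).mpr hd))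
    have hXv : ¬ Disjoint X.1.1 v.1.1 := by
      intro hd
      have hXv' : H.Adj X v := (hG X.1 v.1).mpr hd
      exact hX (hXv'.reachable.trans huv.symm.reachable)
    obtain ⟨a, haX, hau⟩ := Finset.not_disjoint_iff.mp hXu
    obtain ⟨b, hbX, hbv⟩ := Finset.not_disjoint_iff.mp hXv
    have hne : a ≠ b := hab a hau b hbv
    have hsub : ({a, b} : Finset (Fin n)) ⊆ X.1.1 := by
      intro x hx
      rcases Finset.mem_insert.mp hx with rfl | hx
      · exact haX
      · exact (Finset.mem_singleton.mp hx) ▸ hbX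
    have hXeq : X.1.1 = {a, b} := by
      refine (Finset.eq_of_subset_of_card_le hsub ?_).symm
      rw [X.1.2, Finset.card_pair hne]
    rw [hu] at hau
    rw [hv] at hbv
    simp only [Finset.mem_insert, Finset.mem_singleton] at hau hbv
    rcases hau with rfl | rfl <;> rcases hbv with rfl | rfl <;> tauto
  set h : ↥Sᶜ → Fin 3 := fun X =>
    if H.Reachable X u then 0
    else if (a1 ∈ X.1.1 ↔ b1 ∈ X.1.1) then 1 else 2 with hdef
  have hconst : ∀ X Y, H.Adj X Y → h X = h Y := by
    intro X Y hXY
    by_cases hX : H.Reachable X u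
    · have hY : H.Reachable Y u := hXY.symm.reachable.trans hX
      simp only [hdef]
      rw [if_pos hX, if_pos hY]
    · have hY : ¬ H.Reachable Y u := fun hr => hX (hXY.reachable.trans hr)
      have hdXY : Disjoint X.1.1 Y.1.1 := (hG X.1 Y.1).mp hXY
      simp only [hdef]
      rw [if_neg hX, if_neg hY]
      refine if_congr ?_ rfl rfl
      rcases hstruct X hX with hX' | hX' | hX' | hX' <;>
        rcases hstruct Y hY with hY' | hY' | hY' | hY' <;>
        rw [hX', hY'] <;>
        first
        | (exfalso; rw [hX', hY'] at hdXY;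
           simp [Finset.disjoint_left] at hdXY; done)
        | (simp [ha, hb, h11, h12, h21, h22, ha.symm, hb.symm, h11.symm,
            h12.symm, h21.symm, h22.symm]; done)
  have hwalk : ∀ (X Y : ↥Sᶜ) (p : H.Walk X Y), h X = h Y := by
    intro X Y p
    induction p with
    | nil => rfl
    | cons hadj _ ih => exact (hconst _ _ hadj).trans ih
  set f : H.ConnectedComponent → Fin 3 :=
    SimpleGraph.ConnectedComponent.lift h (fun X Y p _ => hwalk X Y p) with hf
  have key : ∀ X Y : ↥Sᶜ, h X = h Y → H.Reachable X Y := by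
    intro X Y hxy
    simp only [hdef] at hxy
    by_cases hX : H.Reachable X u <;> by_cases hY : H.Reachable Y u
    · exact hX.trans hY.symm
    · exfalso
      rw [if_pos hX, if_neg hY] at hxy
      split_ifs at hxy <;> exact absurd hxy (by decide)
    · exfalso
      rw [if_neg hX, if_pos hY] at hxy
      split_ifs at hxy <;> exact absurd hxy (by decide)
    · rw [if_neg hX, if_neg hY] at hxy
      have hadjR : ∀ (A B : ↥Sᶜ), Disjoint A.1.1 B.1.1 → H.Reachable A B := by
        intro A B hd
        have : H.Adj A B := (hG A.1 B.1).mpr hd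
        exact this.reachable
      have hsame : ∀ (A B : ↥Sᶜ), A.1.1 = B.1.1 → H.Reachable A B := by
        intro A B hd
        have : A = B := Subtype.ext (Subtype.ext hd)
        rw [this]
      rcases hstruct X hX with hX' | hX' | hX' | hX' <;>
        rcases hstruct Y hY with hY' | hY' | hY' | hY' <;>
        first
        | (refine hsame X Y ?_; rw [hX', hY']; done)
        | (refine hadjR X Y ?_
           rw [hX', hY']
           simp [Finset.disjoint_left, ha, hb, h11, h12, h21, h22, ha.symm,
              hb.symm, h11.symm, h12.symm, h21.symm, h22.symm]
           done)
        | (exfalso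
           rw [hX', hY'] at hxy
           simp only [Finset.mem_insert, Finset.mem_singleton, ha, hb, h11,
             h12, h21, h22, ha.symm, hb.symm, h11.symm, h12.symm, h21.symm,
             h22.symm, ne_eq, eq_self_iff_true, true_or, or_true, or_false,
             false_or, iff_true, true_iff, iff_false, false_iff,
             not_false_iff, if_true, if_false, ite_true, ite_false,
             not_true, not_false_eq_true] at hxy
           first
           | exact absurd hxy (by decide)
           | exact hxy
           | simp at hxy)
  have hinj : Function.Injective f := by
    intro c d
    refine SimpleGraph.ConnectedComponent.ind₂ (fun X Y hxy => ?_) c d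
    have : h X = h Y := by simpa [hf] using hxy
    exact SimpleGraph.ConnectedComponent.sound (key X Y this)
  have hle := Nat.card_le_card_of_injective f hinj
  have h3 : Nat.card (Fin 3) = 3 := by simp
  omega
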